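/- Let U be a finite-dimensional complex vector space of dimension n and let κ : U → U → ℂ be a bilinear form that is nondegenerate, meaning that the only u ∈ U with κ(u, v) = 0 for all v ∈ U is u = 0, and the only v ∈ U with κ(u, v) = 0 for all u ∈ U is v = 0. For a basis e = (e₁, …, e_n) of U, let M_e : U → U be the conjugate-linear map (semilinear with respect to complex conjugation) determined on basis vectors by M_e(e_j) = Σ_i conj(κ(e_i, e_j)) • e_i. Let V ⊆ U be a subspace. Then the restriction of κ to V is nondegenerate (i.e. the only v ∈ V with κ(v, w) = 0 for all w ∈ V is v = 0) if and only if there exists a basis e of U such that M_e maps V onto V, i.e. M_e(V) = V. (Paper: Lemma 4.4, a subspace is nondegenerate iff it is rigid invariant with respect to some basis.) -/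

import Mathlib

open scoped ComplexConjugate

/-- The conjugate-linear map `M_e` associated with a bilinear form `κ` and a basis `e`:
determined by `M_e(e_j) = Σ_i conj(κ(e_i, e_j)) • e_i`, extended conjugate-linearly, i.e.
`M_e(Σ_j c_j e_j) = Σ_j conj(c_j) • Σ_i conj(κ(e_i, e_j)) • e_i`. -/
noncomputable def rigidMap {U : Type*} [AddCommGroup U] [Module ℂ U]
    (κ : U →ₗ[ℂ] U →ₗ[ℂ] ℂ) {n : ℕ} (e : Module.Basis (Fin n) ℂ U) : U → U :=
  fun x => ∑ j, conj (e.repr x j) • ∑ i, conj (κ (e i) (e j)) • e i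

section helpers

variable {U : Type*} [AddCommGroup U] [Module ℂ U]
    (κ : U →ₗ[ℂ] U →ₗ[ℂ] ℂ) {n : ℕ} (e : Module.Basis (Fin n) ℂ U)

lemma kappa_right_expand (u x : U) : κ u x = ∑ j, e.repr x j * κ u (e j) := by
  conv_lhs => rw [← e.sum_equivFun x]
  simp only [map_sum, map_smul, smul_eq_mul, Module.Basis.equivFun_apply]

lemma kappa_left_expand (u x : U) : κ u x = ∑ j, e.repr u j * κ (e j) x := by
  conv_lhs => rw [← e.sum_equivFun u]
  simp only [map_sum, map_smul, smul_eq_mul, Module.Basis.equivFun_apply, LinearMap.sum_apply, LinearMap.smul_apply]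

lemma rigidMap_eq (x : U) : rigidMap κ e x = ∑ i, conj (κ (e i) x) • e i := by
  unfold rigidMap
  simp only [Finset.smul_sum, smul_smul]
  rw [Finset.sum_comm]
  refine Finset.sum_congr rfl fun i _ => ?_
  rw [← Finset.sum_smul, kappa_right_expand κ e (e i) x, map_sum]
  congr 1
  refine Finset.sum_congr rfl fun j _ => ?_
  rw [map_mul, mul_comm]

lemma rigidMap_eq' (x : U) :
    rigidMap κ e x = e.equivFun.symm (fun i => conj (κ (e i) x)) := by
  rw [rigidMap_eq, Module.Basis.equivFun_symm_apply]

lemma rigidMap_eq_zero (hnd_right : ∀ v : U, (∀ u : U, κ u v = 0) → v = 0)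
    {x : U} (h : rigidMap κ e x = 0) : x = 0 := by
  rw [rigidMap_eq'] at h
  have h2 : (fun i => conj (κ (e i) x)) = (0 : Fin n → ℂ) := by
    have := e.equivFun.symm.map_eq_zero_iff.mp h
    exact this
  have h3 : ∀ i, κ (e i) x = 0 := by
    intro i
    have h := congrFun h2 i
    rw [Pi.zero_apply, starRingEnd_apply] at h
    exact star_eq_zero.mp h
  refine hnd_right x fun u => ?_
  rw [kappa_left_expand κ e u x]
  simp [h3]

lemma rigidMap_add (x y : U) :
    rigidMap κ e (x + y) = rigidMap κ e x + rigidMap κ e y := by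
  simp [rigidMap_eq, map_add, add_smul, Finset.sum_add_distrib]

lemma rigidMap_real_smul (r : ℝ) (x : U) :
    rigidMap κ e (r • x) = r • rigidMap κ e x := by
  simp only [rigidMap_eq, Finset.smul_sum]
  refine Finset.sum_congr rfl fun i _ => ?_
  have h1 : κ (e i) (r • x) = r • κ (e i) x := (κ (e i)).map_smul_of_tower r x
  rw [h1]
  rw [Complex.real_smul, map_mul, Complex.conj_ofReal, mul_smul]
  congr 1

end helpers

/-- **Lemma 4.4.** Let `U` be a finite-dimensional complex vector space with a
nondegenerate bilinear form `κ`, and `V ⊆ U` a subspace.  Then the restriction of `κ` to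
`V` is nondegenerate if and only if there is a basis `e` of `U` such that the associated
conjugate-linear map `M_e` maps `V` onto `V` (i.e. `V` is `e`-rigid invariant). -/
theorem stmt_18 {U : Type*} [AddCommGroup U] [Module ℂ U] [FiniteDimensional ℂ U]
    (κ : U →ₗ[ℂ] U →ₗ[ℂ] ℂ)
    (hnd_left : ∀ u : U, (∀ v : U, κ u v = 0) → u = 0)
    (hnd_right : ∀ v : U, (∀ u : U, κ u v = 0) → v = 0)
    (V : Submodule ℂ U) :
    (∀ v ∈ V, (∀ w ∈ V, κ v w = 0) → v = 0) ↔
      ∃ e : Module.Basis (Fin (Module.finrank ℂ U)) ℂ U,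
        rigidMap κ e '' (V : Set U) = (V : Set U) := by
  constructor
  · intro hV
    classical
    -- the left κ-orthogonal complement of V
    set f : U →ₗ[ℂ] (V →ₗ[ℂ] ℂ) := κ.compl₂ V.subtype with hf
    set W := LinearMap.ker f with hW
    have hmemW : ∀ u : U, u ∈ W ↔ ∀ v ∈ V, κ u v = 0 := by
      intro u
      simp only [hW, LinearMap.mem_ker]
      constructor
      · intro h v hv
        have := LinearMap.congr_fun h ⟨v, hv⟩
        simpa [hf] using this
      · intro h
        ext v
        simpa [hf] using h v v.2
    have hdisj : Disjoint V W := by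
      rw [Submodule.disjoint_def]
      intro x hxV hxW
      exact hV x hxV fun w hw => (hmemW x).mp hxW w hw
    have hsum : Module.finrank ℂ U ≤ Module.finrank ℂ V + Module.finrank ℂ W := by
      have h1 := LinearMap.finrank_range_add_finrank_ker f
      rw [← hW] at h1
      have h2 : Module.finrank ℂ (LinearMap.range f) ≤ Module.finrank ℂ (V →ₗ[ℂ] ℂ) :=
        Submodule.finrank_le _
      have h3 : Module.finrank ℂ (V →ₗ[ℂ] ℂ) = Module.finrank ℂ V := by
        rw [Module.finrank_linearMap, Module.finrank_self, mul_one]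
      omega
    have hcompl : IsCompl V W := by
      refine ⟨hdisj, codisjoint_iff.mpr ?_⟩
      apply Submodule.eq_top_of_finrank_eq
      have h4 := Submodule.finrank_sup_add_finrank_inf_eq V W
      rw [disjoint_iff.mp hdisj, finrank_bot] at h4
      have h5 : Module.finrank ℂ ↥(V ⊔ W) ≤ Module.finrank ℂ U := Submodule.finrank_le _
      omega
    have hk := Submodule.finrank_add_eq_of_isCompl hcompl
    let bV := Module.finBasis ℂ V
    let bW := Module.finBasis ℂ W
    let e0 : Module.Basis (Fin (Module.finrank ℂ ↥V) ⊕ Fin (Module.finrank ℂ ↥W)) ℂ U :=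
      (bV.prod bW).map (Submodule.prodEquivOfIsCompl V W hcompl)
    let e : Module.Basis (Fin (Module.finrank ℂ U)) ℂ U :=
      e0.reindex ((finSumFinEquiv).trans (finCongr hk))
    have he : ∀ i, e i ∈ V ∨ e i ∈ W := by
      intro i
      have : e i = e0 (((finSumFinEquiv).trans (finCongr hk)).symm i) := by
        simp [e]
      rw [this]
      generalize ((finSumFinEquiv.trans (finCongr hk)).symm i) = j
      rcases j with j | j
      · left
        simp only [e0, Module.Basis.map_apply, Module.Basis.prod_apply, Sum.elim_inl, Function.comp_apply,
          LinearMap.inl_apply, Submodule.coe_prodEquivOfIsCompl']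
        simp
      · right
        simp only [e0, Module.Basis.map_apply, Module.Basis.prod_apply, Sum.elim_inr, Function.comp_apply,
          LinearMap.inr_apply, Submodule.coe_prodEquivOfIsCompl']
        simp
    have hMV : ∀ x ∈ V, rigidMap κ e x ∈ V := by
      intro x hx
      rw [rigidMap_eq]
      refine Submodule.sum_mem V fun i _ => ?_
      rcases he i with h | h
      · exact Submodule.smul_mem V _ h
      · have : κ (e i) x = 0 := (hmemW (e i)).mp h x hx
        simp [this]
    refine ⟨e, ?_⟩
    apply Set.Subset.antisymm
    · rintro y ⟨x, hx, rfl⟩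
      exact hMV x hx
    · -- surjectivity via injectivity of the real-linear endomorphism of V
      let g : V →ₗ[ℝ] V :=
        { toFun := fun v => ⟨rigidMap κ e v, hMV v v.2⟩
          map_add' := fun v w => by
            apply Subtype.ext
            simp [rigidMap_add κ e]
          map_smul' := fun r v => by
            apply Subtype.ext
            simp [rigidMap_real_smul κ e] }
      have hker : LinearMap.ker g = ⊥ := by
        rw [LinearMap.ker_eq_bot']
        intro v hv
        apply Subtype.ext
        have : rigidMap κ e (v : U) = 0 := congrArg Subtype.val hv
        exact rigidMap_eq_zero κ e hnd_right this
      have hsurj : Function.Surjective g :=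
        (LinearMap.injective_iff_surjective_of_finrank_eq_finrank rfl).mp
          (LinearMap.ker_eq_bot.mp hker)
      intro v hv
      obtain ⟨w, hw⟩ := hsurj ⟨v, hv⟩
      exact ⟨(w : U), w.2, congrArg Subtype.val hw⟩
  · rintro ⟨e, he⟩ v hv hperp
    have hv' : v ∈ rigidMap κ e '' (V : Set U) := he.symm ▸ hv
    obtain ⟨x, hx, hxv⟩ := hv'
    have hrepr : (fun i => conj (κ (e i) x)) = e.equivFun v := by
      rw [rigidMap_eq'] at hxv
      exact (e.equivFun.symm_apply_eq.mp hxv)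
    have hco : ∀ i, κ (e i) x = conj (e.repr v i) := by
      intro i
      have := congrFun hrepr i
      rw [Module.Basis.equivFun_apply] at this
      rw [← this]
      simp
    have h0 : κ v x = 0 := hperp x hx
    rw [kappa_left_expand κ e v x] at h0
    simp only [hco] at h0
    have h1 : ∀ i, Complex.normSq (e.repr v i) = 0 := by
      have h2 : ((∑ i, Complex.normSq (e.repr v i) : ℝ) : ℂ) = 0 := by
        push_cast
        rw [← h0]
        refine Finset.sum_congr rfl fun i _ => ?_
        rw [Complex.mul_conj]
      have h3 : (∑ i, Complex.normSq (e.repr v i) : ℝ) = 0 := by exact_mod_cast h2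
      intro i
      have := Finset.sum_eq_zero_iff_of_nonneg
        (fun j _ => Complex.normSq_nonneg (e.repr v j)) |>.mp h3 i (Finset.mem_univ i)
      exact this
    have h4 : e.repr v = 0 := by
      ext i
      exact Complex.normSq_eq_zero.mp (h1 i)
    exact e.repr.map_eq_zero_iff.mp h4
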